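/- arXiv:1306.6057 — 2 statements merged into one kernel-verified Lean document; each statement's English description precedes it below -/
import Mathlib

section
/- Let q ≡ 0 (mod 4), m, n ∈ ℤ with (m,n) ≠ (0,0), and σ ∈ {±1, ±i}. Then the sum over p in (ℤ/qℤ)^× with ε_p·(q/p) = σ of e^{2πi(mp + n·p̄)/q} (where p̄ denotes the multiplicative inverse of p mod q) is bounded in absolute value by 7·gcd(m,n,q)^{1/2}·q^{1/2}·τ(q), where τ(q) is the number of positive divisors of q. -/
open Complex Real

private lemma exp_pi_half' : Complex.exp (↑(π/2) * I) = I := by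
  rw [Complex.exp_mul_I]; simp

private lemma I_pow_four'' : (I:ℂ)^4 = 1 := by
  norm_num [pow_succ, Complex.I_mul_I]

private lemma exp_shift' (q p : ℕ) (h4q : 4 ∣ q) (hq : 0 < q)
    (hp4 : p % 4 = 1 ∨ p % 4 = 3) (m : ℤ) (c : ℂ) :
    Complex.exp (2 * π * I * (((m + (q/4 : ℕ) : ℤ)) * p + c) / q)
    = (if p % 4 = 1 then I else -I) * Complex.exp (2 * π * I * (m * p + c) / q) := by
  obtain ⟨k, hk⟩ := h4q
  have hk0 : (k:ℂ) ≠ 0 := by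
    have : 0 < k := by omega
    exact_mod_cast this.ne'
  have hqd : q / 4 = k := by omega
  have hq' : (q : ℂ) = 4 * k := by exact_mod_cast hk
  have hsplit : (2 * π * I * (((m + (q/4 : ℕ) : ℤ)) * p + c) / q : ℂ)
      = 2 * π * I * (m * p + c) / q + 2 * π * I * p / 4 := by
    rw [hqd, hq']
    push_cast
    field_simp
    ring
  rw [hsplit, Complex.exp_add, mul_comm]
  congr 1
  have h1 : (2 * π * I * p / 4 : ℂ) = p * (↑(π/2) * I) := by push_cast; ring
  rw [h1, Complex.exp_nat_mul, exp_pi_half']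
  conv_lhs => rw [← Nat.div_add_mod p 4]
  rw [pow_add, pow_mul, I_pow_four'', one_pow, one_mul]
  rcases hp4 with h|h <;> rw [h] <;> simp [pow_succ, Complex.I_mul_I]

private lemma indicator_four' {t σ c : ℂ} (ht : t ^ 4 = 1) (hσ4 : σ ^ 4 = 1) (hσ0 : σ ≠ 0) :
    (if t = σ then c else 0) = (1/4) * ∑ k ∈ Finset.range 4, (t * σ⁻¹) ^ k * c := by
  rw [← Finset.sum_mul]
  by_cases h : t = σ
  · subst h
    rw [if_pos rfl, mul_inv_cancel₀ hσ0]
    simp [Finset.sum_range_succ]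
  · rw [if_neg h]
    have hx : t * σ⁻¹ ≠ 1 := fun hx1 => h ((mul_inv_eq_one₀ hσ0).mp hx1)
    have h4 : (t*σ⁻¹)^4 = 1 := by rw [mul_pow, ht, inv_pow, hσ4, inv_one, one_mul]
    rw [geom_sum_eq hx, h4]
    simp

private lemma main_aux' (A : Finset ℕ) (t F G : ℕ → ℂ) (σ : ℂ) (hσ4 : σ^4 = 1) (hσ0 : σ ≠ 0)
    (hσn : ‖σ‖ = 1)
    (ht4 : ∀ p ∈ A, t p ^ 4 = 1)
    (htsq : ∀ p ∈ A, t p ^ 2 * F p = -I * G p)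
    (B B' : ℝ) (hB : 0 ≤ B) (hB' : B' ≤ 2 * B)
    (h0 : ‖∑ p ∈ A, F p‖ ≤ B)
    (h1 : ‖∑ p ∈ A, t p * F p‖ ≤ B)
    (h2 : ‖∑ p ∈ A, G p‖ ≤ B')
    (h3 : ‖∑ p ∈ A, t p * G p‖ ≤ B') :
    ‖∑ p ∈ A.filter (fun p => t p = σ), F p‖ ≤ 7 * B := by
  rw [Finset.sum_filter]
  have key : ∑ p ∈ A, (if t p = σ then F p else 0)
      = (1/4) * ∑ k ∈ Finset.range 4, σ⁻¹ ^ k * ∑ p ∈ A, t p ^ k * F p := by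
    rw [Finset.sum_congr rfl (fun p hp => indicator_four' (ht4 p hp) hσ4 hσ0), ← Finset.mul_sum,
      Finset.sum_comm]
    congr 1
    refine Finset.sum_congr rfl fun k _ => ?_
    rw [Finset.mul_sum]
    refine Finset.sum_congr rfl fun p _ => ?_
    rw [mul_pow]; ring
  rw [key]
  have e2 : ∑ p ∈ A, t p ^ 2 * F p = -I * ∑ p ∈ A, G p := by
    rw [Finset.mul_sum]; exact Finset.sum_congr rfl htsq
  have e3 : ∑ p ∈ A, t p ^ 3 * F p = -I * ∑ p ∈ A, t p * G p := by
    rw [Finset.mul_sum]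
    refine Finset.sum_congr rfl fun p hp => ?_
    calc t p ^ 3 * F p = t p * (t p ^ 2 * F p) := by ring
    _ = t p * (-I * G p) := by rw [htsq p hp]
    _ = -I * (t p * G p) := by ring
  have hn : ∀ (k : ℕ) (x : ℂ), ‖σ⁻¹ ^ k * x‖ = ‖x‖ := by
    intro k x
    rw [norm_mul, norm_pow, norm_inv, hσn]
    simp
  have hquart : ‖(1/4 : ℂ)‖ = 1/4 := by norm_num
  calc ‖(1/4 : ℂ) * ∑ k ∈ Finset.range 4, σ⁻¹ ^ k * ∑ p ∈ A, t p ^ k * F p‖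
      = (1/4) * ‖∑ k ∈ Finset.range 4, σ⁻¹ ^ k * ∑ p ∈ A, t p ^ k * F p‖ := by
        rw [norm_mul, hquart]
    _ ≤ (1/4) * ∑ k ∈ Finset.range 4, ‖σ⁻¹ ^ k * ∑ p ∈ A, t p ^ k * F p‖ := by
        gcongr
        exact norm_sum_le _ _
    _ = (1/4) * ∑ k ∈ Finset.range 4, ‖∑ p ∈ A, t p ^ k * F p‖ := by
        congr 1; exact Finset.sum_congr rfl fun k _ => hn k _
    _ ≤ 7 * B := by
        rw [Finset.sum_range_succ, Finset.sum_range_succ, Finset.sum_range_succ,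
          Finset.sum_range_one, e2, e3]
        have b0 : ‖∑ p ∈ A, t p ^ 0 * F p‖ ≤ B := by simpa using h0
        have b1 : ‖∑ p ∈ A, t p ^ 1 * F p‖ ≤ B := by simpa using h1
        have b2 : ‖-I * ∑ p ∈ A, G p‖ ≤ B' := by
          rw [norm_mul]; simpa using h2
        have b3 : ‖-I * ∑ p ∈ A, t p * G p‖ ≤ B' := by
          rw [norm_mul]; simpa using h3
        linarith

/-- Weil-type bound for the Kloosterman sum restricted to the level set
`ε_p (q/p) = σ`, for `q ≡ 0 mod 4`, assuming the Weil bounds for the classical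
and the twisted Kloosterman sums. -/
theorem kloosterman_level_set_bound_q_cong_zero_mod_four (q : ℕ) (hq : 0 < q)
    (h4 : q % 4 = 0) (m n : ℤ) (hmn : (m, n) ≠ (0, 0)) (σ : ℂ)
    (hσ : σ = 1 ∨ σ = -1 ∨ σ = I ∨ σ = -I)
    (hWeil : ∀ m' n' : ℤ,
      ‖∑ p ∈ Finset.filter (fun p => Nat.Coprime p q) (Finset.range q),
          Complex.exp (2 * π * I * (m' * p + n' * (((p : ZMod q)⁻¹).val : ℕ)) / q)‖
        ≤ Real.sqrt (Int.gcd m' (Int.gcd n' q)) * Real.sqrt q * q.divisors.card)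
    (hWeilTwisted : ∀ m' n' : ℤ,
      ‖∑ p ∈ Finset.filter (fun p => Nat.Coprime p q) (Finset.range q),
          (if p % 4 = 1 then (1 : ℂ) else I) * (jacobiSym q p : ℂ) *
            Complex.exp (2 * π * I * (m' * p + n' * (((p : ZMod q)⁻¹).val : ℕ)) / q)‖
        ≤ Real.sqrt (Int.gcd m' (Int.gcd n' q)) * Real.sqrt q * q.divisors.card) :
    ‖∑ p ∈ Finset.filter (fun p => Nat.Coprime p q ∧
          (if p % 4 = 1 then (1 : ℂ) else I) * (jacobiSym q p : ℂ) = σ) (Finset.range q),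
        Complex.exp (2 * π * I * (m * p + n * (((p : ZMod q)⁻¹).val : ℕ)) / q)‖
      ≤ 7 * Real.sqrt (Int.gcd m (Int.gcd n q)) * Real.sqrt q * q.divisors.card := by
  classical
  have h4q : 4 ∣ q := Nat.dvd_of_mod_eq_zero h4
  have h2q : 2 ∣ q := dvd_trans (by norm_num) h4q
  set A := Finset.filter (fun p => Nat.Coprime p q) (Finset.range q) with hA
  -- basic facts about p in A
  have hp4 : ∀ p ∈ A, p % 4 = 1 ∨ p % 4 = 3 := by
    intro p hp
    rw [hA, Finset.mem_filter] at hp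
    have hcop := hp.2
    have h2p : ¬ (2 ∣ p) := by
      intro h2p
      have h := Nat.dvd_gcd h2p h2q
      rw [Nat.Coprime] at hcop
      omega
    omega
  have hjac : ∀ p ∈ A, (jacobiSym q p) = 1 ∨ (jacobiSym q p) = -1 := by
    intro p hp
    rw [hA, Finset.mem_filter] at hp
    apply jacobiSym.eq_one_or_neg_one
    rw [Int.gcd_natCast_natCast]
    exact Nat.coprime_comm.mp hp.2
  -- facts about σ
  have hσ4 : σ ^ 4 = 1 := by
    rcases hσ with rfl | rfl | rfl | rfl
    · norm_num
    · norm_num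
    · exact I_pow_four''
    · rw [show ((-I)^4 : ℂ) = I^4 by ring]; exact I_pow_four''
  have hσ0 : σ ≠ 0 := by
    rcases hσ with rfl | rfl | rfl | rfl <;> simp [Complex.I_ne_zero]
  have hσn : ‖σ‖ = 1 := by
    rcases hσ with rfl | rfl | rfl | rfl <;> simp
  -- the shifted frequency
  set m' : ℤ := m + ((q/4 : ℕ) : ℤ) with hm'
  -- the gcd bound
  have hB' : Real.sqrt (Int.gcd m' (Int.gcd n q)) * Real.sqrt q * (q.divisors.card : ℝ)
      ≤ 2 * (Real.sqrt (Int.gcd m (Int.gcd n q)) * Real.sqrt q * (q.divisors.card : ℝ)) := by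
    set d : ℕ := Int.gcd m (Int.gcd n q) with hd
    set g : ℕ := Int.gcd m' (Int.gcd n q) with hg
    have hqz : ((q:ℤ)) ≠ 0 := by exact_mod_cast hq.ne'
    have hdpos : 0 < d := by
      rw [hd, Int.gcd_pos_iff]
      right
      simp only [ne_eq, Int.natCast_eq_zero]
      rw [Int.gcd_eq_zero_iff]
      push_neg
      intro _
      exact hqz
    have hgd : g ∣ 4 * d := by
      have hgl : (g : ℤ) ∣ m' := Int.gcd_dvd_left _ _
      have hgr : (g : ℤ) ∣ ((Int.gcd n q : ℕ) : ℤ) := Int.gcd_dvd_right _ _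
      have hgq : (g : ℤ) ∣ (q : ℤ) := hgr.trans (Int.gcd_dvd_right _ _)
      have h4m : (g : ℤ) ∣ 4 * m := by
        have hq4 : (4 : ℤ) * ((q/4 : ℕ) : ℤ) = (q : ℤ) := by
          obtain ⟨k, hk⟩ := h4q
          subst hk
          push_cast [Nat.mul_div_cancel_left k (by norm_num : 0 < 4)]
          ring
        have heq4 : 4 * m = 4 * m' - (q : ℤ) := by rw [hm']; rw [← hq4]; ring
        rw [heq4]
        exact (hgl.mul_left 4).sub hgq
      have key : (g : ℤ) ∣ ((Int.gcd (4*m) (4 * ((Int.gcd n q : ℕ) : ℤ)) : ℕ) : ℤ) :=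
        Int.dvd_coe_gcd h4m (hgr.mul_left 4)
      have heq : Int.gcd (4*m) (4 * ((Int.gcd n q : ℕ) : ℤ)) = 4 * d := by
        rw [Int.gcd_mul_left]
        norm_num [hd]
      rw [heq] at key
      exact_mod_cast key
    have hle : (g : ℝ) ≤ ((4 * d : ℕ) : ℝ) := by
      exact_mod_cast Nat.le_of_dvd (by omega) hgd
    have hs : Real.sqrt g ≤ 2 * Real.sqrt d := by
      have h5 := Real.sqrt_le_sqrt hle
      have h4d : Real.sqrt ((4 * d : ℕ) : ℝ) = 2 * Real.sqrt d := by
        push_cast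
        rw [show ((4:ℝ)) = 2^2 by norm_num, Real.sqrt_mul (by positivity),
          Real.sqrt_sq (by norm_num : (0:ℝ) ≤ 2)]
      linarith
    have h1 : (0:ℝ) ≤ Real.sqrt q := Real.sqrt_nonneg _
    have h2 : (0:ℝ) ≤ (q.divisors.card : ℝ) := by positivity
    have h3 := mul_le_mul_of_nonneg_right (mul_le_mul_of_nonneg_right hs h1) h2
    linarith
  -- rewrite the filter
  have hfilter : Finset.filter (fun p => Nat.Coprime p q ∧
        (if p % 4 = 1 then (1 : ℂ) else I) * (jacobiSym q p : ℂ) = σ) (Finset.range q)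
      = A.filter (fun p => (if p % 4 = 1 then (1 : ℂ) else I) * (jacobiSym q p : ℂ) = σ) := by
    rw [hA, Finset.filter_filter]
  rw [hfilter, show (7 : ℝ) * Real.sqrt (Int.gcd m (Int.gcd n q)) * Real.sqrt q * q.divisors.card
      = 7 * (Real.sqrt (Int.gcd m (Int.gcd n q)) * Real.sqrt q * q.divisors.card) by ring]
  refine main_aux' A
    (fun p => (if p % 4 = 1 then (1 : ℂ) else I) * (jacobiSym q p : ℂ))
    (fun p => Complex.exp (2 * π * I * (m * p + n * (((p : ZMod q)⁻¹).val : ℕ)) / q))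
    (fun p => Complex.exp (2 * π * I * (m' * p + n * (((p : ZMod q)⁻¹).val : ℕ)) / q))
    σ hσ4 hσ0 hσn ?_ ?_ _ _ (by positivity) hB' (hWeil m n) (hWeilTwisted m n)
    (hWeil m' n) (hWeilTwisted m' n)
  · -- t^4 = 1
    intro p hp
    have hj2 : ((jacobiSym q p : ℤ) : ℂ)^2 = 1 := by
      rcases hjac p hp with h|h <;> rw [h] <;> norm_num
    rw [mul_pow, show (4:ℕ) = 2*2 by norm_num, pow_mul, pow_mul, hj2, one_pow, mul_one]
    rcases hp4 p hp with h|h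
    · rw [if_pos h]; norm_num
    · have hne : ¬ (p % 4 = 1) := by omega
      rw [if_neg hne, Complex.I_sq]; norm_num
  · -- t^2 * F = -I * G
    intro p hp
    have hj2 : ((jacobiSym q p : ℤ) : ℂ)^2 = 1 := by
      rcases hjac p hp with h|h <;> rw [h] <;> norm_num
    rw [hm', exp_shift' q p h4q hq (hp4 p hp) m ((n:ℂ) * (((p : ZMod q)⁻¹).val : ℕ))]
    rw [mul_pow, hj2, mul_one]
    rcases hp4 p hp with h|h
    · rw [if_pos h, if_pos h]
      rw [show (-I : ℂ) * (I * Complex.exp (2 * π * I *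
          (m * p + n * (((p : ZMod q)⁻¹).val : ℕ)) / q))
        = -(I*I) * Complex.exp (2 * π * I *
          (m * p + n * (((p : ZMod q)⁻¹).val : ℕ)) / q) by ring, Complex.I_mul_I]
      norm_num
    · have hne : ¬ (p % 4 = 1) := by omega
      rw [if_neg hne, if_neg hne]
      rw [show (-I : ℂ) * (-I * Complex.exp (2 * π * I *
          (m * p + n * (((p : ZMod q)⁻¹).val : ℕ)) / q))
        = (I*I) * Complex.exp (2 * π * I *
          (m * p + n * (((p : ZMod q)⁻¹).val : ℕ)) / q) by ring, Complex.I_mul_I,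
        Complex.I_sq]
end

section
/- Let f: ℝ → ℂ be Riemann integrable with compact support, X_q finite nonempty index sets, and g_q, g̃_q: X_q → ℂ functions with the following properties: (a) for every δ, ε > 0 there exist approximants g̃ with limsup_q (1/|X_q|)·|{x ∈ X_q : |g_q(x) - g̃_q(x)| > δ}| < ε; (b) for each approximant, the averages (1/|X_q|)·Σ_{x ∈ X_q} F(g̃_q(x)) converge as q → ∞ for every F ∈ C₀^∞(ℂ). Then for every Lipschitz bounded F: ℂ → ℝ, the sequence (1/|X_q|)·Σ_{x ∈ X_q} F(g_q(x)) is Cauchy and hence converges. -/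
open Filter


lemma avg_diff_bound {α : Type*} (X : Finset α) (hX : X.Nonempty) (g gt : α → ℂ)
    (F : ℂ → ℝ) (C : NNReal) (hC : LipschitzWith C F) (M : ℝ) (hM : ∀ z, |F z| ≤ M)
    (δ : ℝ) (hδ : 0 ≤ δ) :
    |(∑ x ∈ X, F (g x)) / X.card - (∑ x ∈ X, F (gt x)) / X.card| ≤
      C * δ + 2 * M * (((X.filter (fun x => δ < ‖g x - gt x‖)).card : ℝ) / X.card) := by
  have hn : (0:ℝ) < X.card := by exact_mod_cast Finset.card_pos.mpr hX
  have hM0 : 0 ≤ M := le_trans (abs_nonneg _) (hM 0)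
  have key : |∑ x ∈ X, (F (g x) - F (gt x))| ≤
      C * δ * X.card + 2 * M * (X.filter (fun x => δ < ‖g x - gt x‖)).card := by
    refine le_trans (Finset.abs_sum_le_sum_abs _ _) ?_
    rw [← Finset.sum_filter_add_sum_filter_not X (fun x => δ < ‖g x - gt x‖)]
    have h1 : ∑ x ∈ X.filter (fun x => δ < ‖g x - gt x‖), |F (g x) - F (gt x)| ≤
        2 * M * (X.filter (fun x => δ < ‖g x - gt x‖)).card := by
      calc ∑ x ∈ X.filter (fun x => δ < ‖g x - gt x‖), |F (g x) - F (gt x)|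
          ≤ ∑ _x ∈ X.filter (fun x => δ < ‖g x - gt x‖), 2 * M := by
            refine Finset.sum_le_sum fun x _ => ?_
            calc |F (g x) - F (gt x)| ≤ |F (g x)| + |F (gt x)| := abs_sub _ _
              _ ≤ M + M := add_le_add (hM _) (hM _)
              _ = 2 * M := by ring
        _ = 2 * M * (X.filter (fun x => δ < ‖g x - gt x‖)).card := by
            rw [Finset.sum_const, nsmul_eq_mul, mul_comm]
    have h2 : ∑ x ∈ X.filter (fun x => ¬ δ < ‖g x - gt x‖), |F (g x) - F (gt x)| ≤
        C * δ * X.card := by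
      calc ∑ x ∈ X.filter (fun x => ¬ δ < ‖g x - gt x‖), |F (g x) - F (gt x)|
          ≤ ∑ _x ∈ X.filter (fun x => ¬ δ < ‖g x - gt x‖), (C:ℝ) * δ := by
            refine Finset.sum_le_sum fun x hx => ?_
            have hle : ‖g x - gt x‖ ≤ δ := not_lt.mp (Finset.mem_filter.mp hx).2
            have := hC.dist_le_mul (g x) (gt x)
            rw [Real.dist_eq, Complex.dist_eq] at this
            exact this.trans (mul_le_mul_of_nonneg_left hle C.coe_nonneg)
        _ = (C:ℝ) * δ * (X.filter (fun x => ¬ δ < ‖g x - gt x‖)).card := by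
            rw [Finset.sum_const, nsmul_eq_mul, mul_comm]
        _ ≤ C * δ * X.card := by
            refine mul_le_mul_of_nonneg_left ?_ (by positivity)
            exact_mod_cast Finset.card_le_card (Finset.filter_subset _ _)
    linarith
  calc |(∑ x ∈ X, F (g x)) / X.card - (∑ x ∈ X, F (gt x)) / X.card|
      = |∑ x ∈ X, (F (g x) - F (gt x))| / X.card := by
        rw [div_sub_div_same, ← Finset.sum_sub_distrib, abs_div, abs_of_pos hn]
    _ ≤ (C * δ * X.card + 2 * M * (X.filter (fun x => δ < ‖g x - gt x‖)).card) / X.card := by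
        gcongr
    _ = C * δ + 2 * M * (((X.filter (fun x => δ < ‖g x - gt x‖)).card : ℝ) / X.card) := by
        field_simp

/-- Abstract approximation step: if `g` admits approximants `g̃` that agree with
`g` up to `δ` outside an exceptional set of asymptotic proportion `< ε`, and for
each approximant the averages of `F ∘ g̃` converge for every Lipschitz bounded
`F`, then for every Lipschitz bounded `F : ℂ → ℝ` the averages of `F ∘ g` form a
Cauchy sequence and hence converge. -/
theorem approximation_cauchy {α : Type*} (X : ℕ → Finset α) (hX : ∀ q, (X q).Nonempty)
    (g : ℕ → α → ℂ)
    (happrox : ∀ δ : ℝ, 0 < δ → ∀ ε : ℝ, 0 < ε → ∃ gt : ℕ → α → ℂ,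
      limsup (fun q =>
          (((X q).filter (fun x => δ < ‖g q x - gt q x‖)).card : ℝ) / (X q).card) atTop < ε
      ∧ ∀ F : ℂ → ℝ, (∃ C : NNReal, LipschitzWith C F) → (∃ M : ℝ, ∀ z, |F z| ≤ M) →
          ∃ l : ℝ, Tendsto (fun q => (∑ x ∈ X q, F (gt q x)) / (X q).card) atTop (nhds l)) :
    ∀ F : ℂ → ℝ, (∃ C : NNReal, LipschitzWith C F) → (∃ M : ℝ, ∀ z, |F z| ≤ M) →
      CauchySeq (fun q => (∑ x ∈ X q, F (g q x)) / (X q).card) ∧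
      ∃ l : ℝ, Tendsto (fun q => (∑ x ∈ X q, F (g q x)) / (X q).card) atTop (nhds l) := by
  intro F hFlip hFbd
  obtain ⟨C, hC⟩ := hFlip
  obtain ⟨M, hM⟩ := hFbd
  have hM0 : 0 ≤ M := le_trans (abs_nonneg _) (hM 0)
  set a : ℕ → ℝ := fun q => (∑ x ∈ X q, F (g q x)) / (X q).card with ha
  have hcauchy : CauchySeq a := by
    rw [Metric.cauchySeq_iff]
    intro ε hε
    have hδpos : 0 < ε / (8 * ((C:ℝ) + 1)) := by positivity
    have hε'pos : 0 < ε / (16 * (M + 1)) := by positivity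
    obtain ⟨gt, hlimsup, hconv⟩ := happrox _ hδpos _ hε'pos
    set δ := ε / (8 * ((C:ℝ) + 1))
    set ε' := ε / (16 * (M + 1))
    set b : ℕ → ℝ := fun q => (∑ x ∈ X q, F (gt q x)) / (X q).card with hb
    obtain ⟨l, hl⟩ := hconv F ⟨C, hC⟩ ⟨M, hM⟩
    have hbc : CauchySeq b := hl.cauchySeq
    rw [Metric.cauchySeq_iff] at hbc
    obtain ⟨N1, hN1⟩ := hbc (ε/4) (by positivity)
    -- eventually the proportion is < ε'
    have hbdd : IsBoundedUnder (· ≤ ·) atTop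
        (fun q => (((X q).filter (fun x => δ < ‖g q x - gt q x‖)).card : ℝ) / (X q).card) := by
      refine isBoundedUnder_of ⟨1, fun q => ?_⟩
      have hn : (0:ℝ) < (X q).card := by exact_mod_cast Finset.card_pos.mpr (hX q)
      rw [div_le_one hn]
      exact_mod_cast Finset.card_le_card (Finset.filter_subset _ _)
    have hev := eventually_lt_of_limsup_lt hlimsup hbdd
    obtain ⟨N2, hN2⟩ := eventually_atTop.mp hev
    refine ⟨max N1 N2, fun m hm n hn => ?_⟩
    have hab : ∀ k, N2 ≤ k → |a k - b k| ≤ ε/4 := by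
      intro k hk
      have h1 := avg_diff_bound (X k) (hX k) (g k) (gt k) F C hC M hM δ hδpos.le
      have h2 := (hN2 k hk).le
      have hC1 : ((C:ℝ) + 1) ≠ 0 := by positivity
      have hM1 : (M + 1) ≠ 0 := by positivity
      have hCδ : (C:ℝ) * δ ≤ ε/8 := by
        calc (C:ℝ) * δ = (C:ℝ) * (ε / (8 * ((C:ℝ) + 1))) := rfl
          _ ≤ ((C:ℝ)+1) * (ε / (8 * ((C:ℝ) + 1))) :=
              mul_le_mul_of_nonneg_right (by linarith [C.coe_nonneg]) hδpos.le
          _ = ε/8 := by field_simp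
      have hMε : 2 * M * (((X k).filter (fun x => δ < ‖g k x - gt k x‖)).card : ℝ) / (X k).card ≤ ε/8 := by
        have hnn : (0:ℝ) ≤ (((X k).filter (fun x => δ < ‖g k x - gt k x‖)).card : ℝ) / (X k).card := by
          positivity
        calc 2 * M * (((X k).filter (fun x => δ < ‖g k x - gt k x‖)).card : ℝ) / (X k).card
            = 2 * M * ((((X k).filter (fun x => δ < ‖g k x - gt k x‖)).card : ℝ) / (X k).card) := by ring
          _ ≤ 2 * M * ε' := by exact mul_le_mul_of_nonneg_left h2 (by positivity)
          _ ≤ ε/8 := by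
              calc 2 * M * ε' = 2 * M * (ε / (16 * (M + 1))) := rfl
                _ ≤ 2 * (M+1) * (ε / (16 * (M + 1))) :=
                    mul_le_mul_of_nonneg_right (by linarith) hε'pos.le
                _ = ε/8 := by field_simp; ring
      calc |a k - b k| ≤ C * δ + 2 * M * ((((X k).filter (fun x => δ < ‖g k x - gt k x‖)).card : ℝ) / (X k).card) := h1
        _ ≤ ε/8 + ε/8 := by
            refine add_le_add hCδ ?_
            calc 2 * M * ((((X k).filter (fun x => δ < ‖g k x - gt k x‖)).card : ℝ) / (X k).card)
                = 2 * M * (((X k).filter (fun x => δ < ‖g k x - gt k x‖)).card : ℝ) / (X k).card := by ring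
              _ ≤ ε/8 := hMε
        _ = ε/4 := by ring
    have h1 := hab m (le_trans (le_max_right _ _) hm)
    have h2 := hab n (le_trans (le_max_right _ _) hn)
    have h3 := hN1 m (le_trans (le_max_left _ _) hm) n (le_trans (le_max_left _ _) hn)
    rw [Real.dist_eq] at h3 ⊢
    have : a m - a n = (a m - b m) + (b m - b n) + (b n - a n) := by ring
    rw [this]
    calc |(a m - b m) + (b m - b n) + (b n - a n)|
        ≤ |a m - b m| + |b m - b n| + |b n - a n| := by
          exact le_trans (abs_add_le _ _) (add_le_add_left (abs_add_le _ _) _)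
      _ < ε := by
          have h2' : |b n - a n| ≤ ε/4 := by rw [abs_sub_comm]; exact h2
          linarith
  exact ⟨hcauchy, cauchySeq_tendsto_of_complete hcauchy⟩
end
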